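/- For every even n ≥ 4, Rubinstein's function satisfies 4 · bs(f_R) ≥ s(f_R) · salt(f_R), i.e., bs(f_R) ≥ s(f_R)·salt(f_R)/4. -/
import Mathlib


open scoped Classical

/-- Pointwise XOR of Boolean vectors. -/
def bxor {n : ℕ} (x y : Fin n → Bool) : Fin n → Bool := fun i => Bool.xor (x i) (y i)

/-- Indicator vector of a set of coordinates. -/
def eB {n : ℕ} (B : Finset (Fin n)) : Fin n → Bool := fun i => decide (i ∈ B)

/-- Standard basis vector. -/
def eI {n : ℕ} (i : Fin n) : Fin n → Bool := fun j => decide (j = i)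

/-- Sensitivity of `f` at `a`. -/
def sensAt {n : ℕ} (f : (Fin n → Bool) → Bool) (a : Fin n → Bool) : ℕ :=
  (Finset.univ.filter fun i : Fin n => f (bxor a (eI i)) ≠ f a).card

/-- Sensitivity of `f`. -/
def sens {n : ℕ} (f : (Fin n → Bool) → Bool) : ℕ :=
  Finset.univ.sup fun a : Fin n → Bool => sensAt f a

/-- Block sensitivity of `f` at `a`: the largest number of pairwise disjoint nonempty
sensitive blocks. -/
def bsAt {n : ℕ} (f : (Fin n → Bool) → Bool) (a : Fin n → Bool) : ℕ :=
  Finset.univ.sup fun S : Finset (Finset (Fin n)) =>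
    if (∀ B ∈ S, B.Nonempty ∧ f (bxor a (eB B)) ≠ f a) ∧
       (∀ B ∈ S, ∀ C ∈ S, B ≠ C → Disjoint B C)
    then S.card else 0

/-- Block sensitivity of `f`. -/
def bs {n : ℕ} (f : (Fin n → Bool) → Bool) : ℕ :=
  Finset.univ.sup fun a : Fin n → Bool => bsAt f a

/-- `x` is a monotone chain `0^n = x^0 ≺ x^1 ≺ ⋯ ≺ x^n = 1^n` in the Boolean cube
(each step strictly increases, hence flips exactly one coordinate from 0 to 1). -/
def IsChainOn {n : ℕ} (x : Fin (n + 1) → Fin n → Bool) : Prop :=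
  x 0 = (fun _ => false) ∧ x (Fin.last n) = (fun _ => true) ∧
    ∀ i : Fin n, (∀ j, x i.castSucc j ≤ x i.succ j) ∧ x i.castSucc ≠ x i.succ

/-- Alternation of `f` along a chain `x`. -/
def altChain {n : ℕ} (f : (Fin n → Bool) → Bool) (x : Fin (n + 1) → Fin n → Bool) : ℕ :=
  (Finset.univ.filter fun i : Fin n => f (x i.succ) ≠ f (x i.castSucc)).card

/-- Alternation of `f`: maximal alternation along a chain. -/
noncomputable def altF {n : ℕ} (f : (Fin n → Bool) → Bool) : ℕ :=
  Finset.univ.sup fun x : Fin (n + 1) → Fin n → Bool =>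
    if IsChainOn x then altChain f x else 0

/-- Shift-invariant alternation: minimum alternation over all shifts of `f`. -/
noncomputable def saltF {n : ℕ} (f : (Fin n → Bool) → Bool) : ℕ :=
  (Finset.univ : Finset (Fin n → Bool)).inf' Finset.univ_nonempty
    fun b => altF fun x => f (bxor x b)

theorem mulIdx_lt {k n : ℕ} (i : Fin k) (j : Fin n) : i.1 * n + j.1 < k * n := by
  calc i.1 * n + j.1 < i.1 * n + n := Nat.add_lt_add_left j.isLt _
    _ = (i.1 + 1) * n := by ring
    _ ≤ k * n := Nat.mul_le_mul_right n i.isLt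

/-- `hR a = 1` iff `a` has two consecutive ones starting at an odd (1-based) position and
all other coordinates zero; in 0-based indexing: `a` is the indicator of `{j, j+1}` for
some even `j` (0-based) with `j + 1 < n`. -/
def hR {n : ℕ} (a : Fin n → Bool) : Bool :=
  decide (∃ j : Fin n, j.1 % 2 = 0 ∧ j.1 + 1 < n ∧
    ∀ l : Fin n, a l = decide (l.1 = j.1 ∨ l.1 = j.1 + 1))

/-- Rubinstein's function on an `n × n` Boolean matrix (row `i` is
`y_{i·n}, …, y_{i·n + n - 1}`): the OR over rows of `hR`. -/
def fR (n : ℕ) : (Fin (n * n) → Bool) → Bool := fun y =>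
  decide (∃ i : Fin n, hR (fun j : Fin n => y ⟨i.1 * n + j.1, mulIdx_lt i j⟩) = true)

namespace S11
variable {n : ℕ}

def idx (i j : Fin n) : Fin (n * n) := ⟨i.1 * n + j.1, mulIdx_lt i j⟩

def rowF (y : Fin (n * n) → Bool) (i : Fin n) : Fin n → Bool := fun j => y (idx i j)

lemma fR_iff (y : Fin (n*n) → Bool) : fR n y = true ↔ ∃ i, hR (rowF y i) = true := by
  rw [fR, decide_eq_true_iff]; rfl

lemma hR_iff (a : Fin n → Bool) : hR a = true ↔ ∃ j : Fin n, j.1 % 2 = 0 ∧ j.1 + 1 < n ∧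
    ∀ l : Fin n, a l = decide (l.1 = j.1 ∨ l.1 = j.1 + 1) := by simp [hR]

def rowIdx (hp : 0 < n) (c : Fin (n * n)) : Fin n :=
  ⟨c.1 / n, by rw [Nat.div_lt_iff_lt_mul hp]; exact c.2⟩

def colIdx (hp : 0 < n) (c : Fin (n * n)) : Fin n := ⟨c.1 % n, Nat.mod_lt _ hp⟩

lemma rowIdx_idx (hp : 0 < n) (i j : Fin n) : rowIdx hp (idx i j) = i := by
  apply Fin.ext
  simp only [rowIdx, idx]
  rw [Nat.mul_comm, Nat.mul_add_div hp, Nat.div_eq_of_lt j.2, Nat.add_zero]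

lemma idx_rowIdx_colIdx (hp : 0 < n) (c : Fin (n * n)) :
    idx (rowIdx hp c) (colIdx hp c) = c := by
  apply Fin.ext
  simp only [idx, rowIdx, colIdx]
  rw [Nat.mul_comm]
  exact Nat.div_add_mod c.1 n


lemma idx_inj {i j i' j' : Fin n} (hp : 0 < n) (h : idx i j = idx i' j') : i = i' ∧ j = j' := by
  have h1 := congrArg (rowIdx hp) h
  rw [rowIdx_idx hp, rowIdx_idx hp] at h1
  refine ⟨h1, ?_⟩
  subst h1
  apply Fin.ext
  simp only [idx, Fin.mk.injEq] at h
  omega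

/-- two comparable pair-indicators are equal -/
lemma pair_le_eq {u v : Fin n → Bool} (hu : hR u = true) (hv : hR v = true)
    (h : ∀ l, u l = true → v l = true) : u = v := by
  obtain ⟨j, hj0, hj1, hju⟩ := (hR_iff u).1 hu
  obtain ⟨k, hk0, hk1, hkv⟩ := (hR_iff v).1 hv
  have huj : u j = true := by rw [hju]; simp
  have huj1 : u ⟨j.1 + 1, hj1⟩ = true := by rw [hju]; simp
  have hvj := h j huj
  have hvj1 := h _ huj1
  rw [hkv] at hvj hvj1
  simp only [decide_eq_true_iff] at hvj hvj1
  have hjk : j.1 = k.1 := by omega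
  funext l
  rw [hju, hkv, hjk]

lemma hR_pair_mem {u : Fin n → Bool} (hu : hR u = true) :
    ∃ j : Fin n, j.1 % 2 = 0 ∧ j.1 + 1 < n ∧
      ∀ l : Fin n, u l = true ↔ (l.1 = j.1 ∨ l.1 = j.1 + 1) := by
  obtain ⟨j, hj0, hj1, hju⟩ := (hR_iff u).1 hu
  exact ⟨j, hj0, hj1, fun l => by rw [hju]; simp⟩

lemma rowF_eq_of_agree {y z : Fin (n*n) → Bool} (hp : 0 < n) (r i : Fin n) (hir : i ≠ r)
    (h : ∀ c : Fin (n*n), rowIdx hp c ≠ r → y c = z c) : rowF y i = rowF z i := by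
  funext j
  exact h (idx i j) (by rw [rowIdx_idx hp]; exact hir)

lemma fR_false_all {y : Fin (n*n) → Bool} (h : fR n y = false) :
    ∀ i, hR (rowF y i) = false := by
  intro i
  by_contra hc
  have : fR n y = true := (fR_iff y).2 ⟨i, by simpa using hc⟩
  rw [this] at h; simp at h

lemma colIdx_idx (hp : 0 < n) (i j : Fin n) : colIdx hp (idx i j) = j := by
  apply Fin.ext
  simp only [colIdx, idx]
  rw [Nat.mul_comm, Nat.mul_add_mod, Nat.mod_eq_of_lt j.2]

lemma rowF_flip {a : Fin (n*n) → Bool} {c : Fin (n*n)} (hp : 0 < n) {i : Fin n}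
    (hir : i ≠ rowIdx hp c) : rowF (bxor a (eI c)) i = rowF a i := by
  apply rowF_eq_of_agree hp (rowIdx hp c) i hir
  intro d hd
  have hdc : d ≠ c := fun h => hd (by rw [h])
  simp [bxor, eI, hdc]

lemma flip_row_val (hp : 0 < n) (a : Fin (n*n) → Bool) (c : Fin (n*n)) (j : Fin n) :
    rowF (bxor a (eI c)) (rowIdx hp c) j
      = Bool.xor (a (idx (rowIdx hp c) j)) (decide (j = colIdx hp c)) := by
  have : (idx (rowIdx hp c) j = c) ↔ (j = colIdx hp c) := by
    constructor
    · intro h; rw [← h, colIdx_idx]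
    · intro h; rw [h, idx_rowIdx_colIdx]
  simp only [rowF, bxor, eI, this]

lemma flip_pair_row {a : Fin (n*n) → Bool} {c : Fin (n*n)} (hp : 0 < n)
    (hfa : fR n a = false) (hc : fR n (bxor a (eI c)) = true) :
    hR (rowF (bxor a (eI c)) (rowIdx hp c)) = true := by
  obtain ⟨i, hi⟩ := (fR_iff _).1 hc
  rcases eq_or_ne i (rowIdx hp c) with h | h
  · rwa [← h]
  · rw [rowF_flip hp h] at hi
    rw [fR_false_all hfa i] at hi
    exact absurd hi (by simp)


lemma sens_false_core {a : Fin (n*n) → Bool} {c c' : Fin (n*n)} (hp : 0 < n)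
    (hfa : fR n a = false)
    (h1 : fR n (bxor a (eI c)) = true) (h1' : fR n (bxor a (eI c')) = true)
    (hr : rowIdx hp c = rowIdx hp c') (hne : c ≠ c') : False := by
  have hu := flip_pair_row hp hfa h1
  have hv := flip_pair_row hp hfa h1'
  rw [← hr] at hv
  obtain ⟨p, hp0, hp1, hpu⟩ := hR_pair_mem hu
  obtain ⟨q, hq0, hq1, hqv⟩ := hR_pair_mem hv
  have hcol : colIdx hp c ≠ colIdx hp c' := by
    intro h
    apply hne
    rw [← idx_rowIdx_colIdx hp c, ← idx_rowIdx_colIdx hp c', ← hr, ← h]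
  have hcolv : (colIdx hp c).1 ≠ (colIdx hp c').1 := fun h => hcol (Fin.ext h)
  -- values of the two flipped rows
  have eu : ∀ l, rowF (bxor a (eI c)) (rowIdx hp c) l
      = Bool.xor (a (idx (rowIdx hp c) l)) (decide (l = colIdx hp c)) :=
    fun l => flip_row_val hp a c l
  have ev : ∀ l, rowF (bxor a (eI c')) (rowIdx hp c) l
      = Bool.xor (a (idx (rowIdx hp c) l)) (decide (l = colIdx hp c')) := by
    intro l
    have := flip_row_val hp a c' l
    rw [← hr] at this
    exact this
  -- the two rows disagree exactly at the two flipped columns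
  have hagree : ∀ l : Fin n, l ≠ colIdx hp c → l ≠ colIdx hp c' →
      rowF (bxor a (eI c)) (rowIdx hp c) l = rowF (bxor a (eI c')) (rowIdx hp c) l := by
    intro l h1l h2l
    rw [eu l, ev l]
    simp [h1l, h2l]
  have Dx : ¬((rowF (bxor a (eI c)) (rowIdx hp c) (colIdx hp c) = true) ↔
      (rowF (bxor a (eI c')) (rowIdx hp c) (colIdx hp c) = true)) := by
    rw [eu, ev]
    simp [hcol]
  rw [hpu, hqv] at Dx
  have P1 : Fin n := ⟨p.1 + 1, hp1⟩
  have Hp : p.1 = (colIdx hp c).1 ∨ p.1 = (colIdx hp c').1 ∨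
      (p.1 = q.1 ∨ p.1 = q.1 + 1) := by
    by_cases e1 : p = colIdx hp c
    · exact Or.inl (congrArg Fin.val e1)
    by_cases e2 : p = colIdx hp c'
    · exact Or.inr (Or.inl (congrArg Fin.val e2))
    · refine Or.inr (Or.inr ((hqv p).1 ?_))
      rw [← hagree p e1 e2]
      exact (hpu p).2 (Or.inl rfl)
  have Hp1 : p.1 + 1 = (colIdx hp c).1 ∨ p.1 + 1 = (colIdx hp c').1 ∨
      (p.1 + 1 = q.1 ∨ p.1 + 1 = q.1 + 1) := by
    by_cases e1 : (⟨p.1 + 1, hp1⟩ : Fin n) = colIdx hp c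
    · exact Or.inl (congrArg Fin.val e1)
    by_cases e2 : (⟨p.1 + 1, hp1⟩ : Fin n) = colIdx hp c'
    · exact Or.inr (Or.inl (congrArg Fin.val e2))
    · refine Or.inr (Or.inr ((hqv ⟨p.1 + 1, hp1⟩).1 ?_))
      rw [← hagree _ e1 e2]
      exact (hpu _).2 (Or.inr rfl)
  have Hq : q.1 = (colIdx hp c).1 ∨ q.1 = (colIdx hp c').1 ∨
      (q.1 = p.1 ∨ q.1 = p.1 + 1) := by
    by_cases e1 : q = colIdx hp c
    · exact Or.inl (congrArg Fin.val e1)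
    by_cases e2 : q = colIdx hp c'
    · exact Or.inr (Or.inl (congrArg Fin.val e2))
    · refine Or.inr (Or.inr ((hpu q).1 ?_))
      rw [hagree q e1 e2]
      exact (hqv q).2 (Or.inl rfl)
  have Hq1 : q.1 + 1 = (colIdx hp c).1 ∨ q.1 + 1 = (colIdx hp c').1 ∨
      (q.1 + 1 = p.1 ∨ q.1 + 1 = p.1 + 1) := by
    by_cases e1 : (⟨q.1 + 1, hq1⟩ : Fin n) = colIdx hp c
    · exact Or.inl (congrArg Fin.val e1)
    by_cases e2 : (⟨q.1 + 1, hq1⟩ : Fin n) = colIdx hp c'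
    · exact Or.inr (Or.inl (congrArg Fin.val e2))
    · refine Or.inr (Or.inr ((hpu ⟨q.1 + 1, hq1⟩).1 ?_))
      rw [hagree _ e1 e2]
      exact (hqv _).2 (Or.inr rfl)
  omega

lemma sensAt_fR_le (hp : 0 < n) (a : Fin (n*n) → Bool) : sensAt (fR n) a ≤ n := by
  rw [sensAt]
  rcases Bool.eq_false_or_eq_true (fR n a) with hfa | hfa
  · -- f(a) = true : all sensitive coordinates live in the unique witness row
    obtain ⟨w, hw⟩ := (fR_iff a).1 hfa
    have hsub : (Finset.univ.filter fun c : Fin (n*n) =>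
        fR n (bxor a (eI c)) ≠ fR n a) ⊆ Finset.image (fun j : Fin n => idx w j) Finset.univ := by
      intro c hc
      have hsen := (Finset.mem_filter.1 hc).2
      have hrc : rowIdx hp c = w := by
        by_contra hne
        have : rowF (bxor a (eI c)) w = rowF a w := rowF_flip hp (fun h => hne h.symm)
        exact hsen (by rw [hfa]; exact (fR_iff _).2 ⟨w, by rw [this]; exact hw⟩)
      exact Finset.mem_image.2 ⟨colIdx hp c, Finset.mem_univ _,
        by rw [← hrc]; exact idx_rowIdx_colIdx hp c⟩
    calc (Finset.univ.filter fun c : Fin (n*n) =>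
        fR n (bxor a (eI c)) ≠ fR n a).card
        ≤ (Finset.image (fun j : Fin n => idx w j) Finset.univ).card := Finset.card_le_card hsub
      _ ≤ (Finset.univ : Finset (Fin n)).card := Finset.card_image_le
      _ = n := by simp
  · -- f(a) = false : at most one sensitive coordinate per row
    have hcard : (Finset.univ.filter fun c : Fin (n*n) =>
        fR n (bxor a (eI c)) ≠ fR n a).card ≤ (Finset.univ : Finset (Fin n)).card := by
      apply Finset.card_le_card_of_injOn (fun c => rowIdx hp c)
        (fun c _ => Finset.mem_univ _)
      intro c hc c' hc' hr0
      have hr : rowIdx hp c = rowIdx hp c' := hr0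
      by_contra hne
      have h1 : fR n (bxor a (eI c)) = true := by
        have := (Finset.mem_filter.1 (Finset.mem_coe.1 hc)).2
        rw [hfa] at this; exact Bool.ne_false_iff.mp this
      have h1' : fR n (bxor a (eI c')) = true := by
        have := (Finset.mem_filter.1 (Finset.mem_coe.1 hc')).2
        rw [hfa] at this; exact Bool.ne_false_iff.mp this
      exact sens_false_core hp hfa h1 h1' hr hne
    simpa using hcard


lemma sens_fR_le (hp : 0 < n) : sens (fR n) ≤ n :=
  Finset.sup_le fun a _ => sensAt_fR_le hp a

lemma two_k_lt (k : Fin (n/2)) : 2 * k.1 + 1 < n := by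
  have := k.2; omega

def blk (i : Fin n) (k : Fin (n / 2)) : Finset (Fin (n * n)) :=
  {idx i ⟨2 * k.1, by have := two_k_lt k; omega⟩, idx i ⟨2 * k.1 + 1, two_k_lt k⟩}

lemma fR_zero : fR n (fun _ => false) = false := by
  rw [Bool.eq_false_iff]
  intro h
  obtain ⟨i, hi⟩ := (fR_iff _).1 h
  obtain ⟨j, _, _, hj⟩ := (hR_iff _).1 hi
  have := hj j
  simp [rowF] at this

lemma bxor_zero (v : Fin (n*n) → Bool) : bxor (fun _ => false) v = v := by
  funext c; simp [bxor]

lemma mem_blk_iff (hp : 0 < n) {i : Fin n} {k : Fin (n/2)} (c : Fin (n*n)) :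
    c ∈ blk i k ↔ rowIdx hp c = i ∧ ((colIdx hp c).1 = 2*k.1 ∨ (colIdx hp c).1 = 2*k.1+1) := by
  constructor
  · intro h
    rcases Finset.mem_insert.1 h with h | h
    · rw [h, rowIdx_idx, colIdx_idx]; exact ⟨rfl, Or.inl rfl⟩
    · rw [Finset.mem_singleton.1 h, rowIdx_idx, colIdx_idx]; exact ⟨rfl, Or.inr rfl⟩
  · rintro ⟨h1, h2 | h2⟩
    · apply Finset.mem_insert.2; left
      rw [← idx_rowIdx_colIdx hp c, h1]
      congr 1
      exact Fin.ext h2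
    · apply Finset.mem_insert.2; right
      apply Finset.mem_singleton.2
      rw [← idx_rowIdx_colIdx hp c, h1]
      congr 1
      exact Fin.ext h2

lemma fR_blk (hp : 0 < n) (i : Fin n) (k : Fin (n/2)) : fR n (eB (blk i k)) = true := by
  apply (fR_iff _).2
  refine ⟨i, (hR_iff _).2 ⟨⟨2*k.1, by have := two_k_lt k; omega⟩, by simp [Nat.mul_mod_right], two_k_lt k, ?_⟩⟩
  intro l
  show eB (blk i k) (idx i l) = _
  rw [eB]
  have hiff : (idx i l ∈ blk i k) ↔ (l.1 = 2*k.1 ∨ l.1 = 2*k.1+1) := by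
    rw [mem_blk_iff hp, rowIdx_idx, colIdx_idx]; simp
  simp only [decide_eq_decide]
  rw [hiff]

lemma blk_disj (hp : 0 < n) {i i' : Fin n} {k k' : Fin (n/2)}
    (h : blk i k ≠ blk i' k') : Disjoint (blk i k) (blk i' k') := by
  rw [Finset.disjoint_left]
  intro c hc hc'
  rw [mem_blk_iff hp] at hc hc'
  apply h
  have hi : i = i' := hc.1 ▸ hc'.1 ▸ rfl
  have hk : k = k' := by apply Fin.ext; omega
  rw [hi, hk]

lemma blk_inj (hp : 0 < n) : Function.Injective
    (fun pr : Fin n × Fin (n/2) => blk pr.1 pr.2) := by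
  intro pr pr' h
  simp only at h
  have hm : idx pr.1 ⟨2 * pr.2.1, by have := two_k_lt pr.2; omega⟩ ∈ blk pr'.1 pr'.2 := by
    rw [← h]; exact Finset.mem_insert_self _ _
  rw [mem_blk_iff hp, rowIdx_idx, colIdx_idx] at hm
  obtain ⟨h1, h2⟩ := hm
  have : pr.2 = pr'.2 := by apply Fin.ext; simp at h2; omega
  exact Prod.ext h1 this

lemma bs_fR_ge (hp : 0 < n) : n * (n / 2) ≤ bs (fR n) := by
  have h1 : n * (n / 2) ≤ bsAt (fR n) (fun _ => false) := by
    rw [bsAt]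
    have hmem : (Finset.image (fun pr : Fin n × Fin (n/2) => blk pr.1 pr.2) Finset.univ)
        ∈ (Finset.univ : Finset (Finset (Finset (Fin (n*n))))) := Finset.mem_univ _
    refine le_trans ?_ (Finset.le_sup hmem)
    rw [if_pos]
    · rw [Finset.card_image_of_injective _ (blk_inj hp)]
      simp
    · constructor
      · intro B hB
        obtain ⟨pr, _, hpr⟩ := Finset.mem_image.1 hB
        subst hpr
        refine ⟨⟨_, Finset.mem_insert_self _ _⟩, ?_⟩
        rw [bxor_zero, fR_zero, fR_blk hp]
        simp
      · intro B hB C hC hBC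
        obtain ⟨pr, _, hpr⟩ := Finset.mem_image.1 hB
        obtain ⟨pr', _, hpr'⟩ := Finset.mem_image.1 hC
        subst hpr; subst hpr'
        exact blk_disj hp hBC
  exact le_trans h1 (Finset.le_sup (Finset.mem_univ _))


section Chain

variable {x : Fin (n*n+1) → Fin (n*n) → Bool}

lemma chain_mono (hx : IsChainOn x) {s t : Fin (n*n+1)} (hst : s ≤ t) (c : Fin (n*n)) :
    x s c ≤ x t c := by
  have hm : Monotone (fun u : Fin (n*n+1) => x u c) :=
    Fin.monotone_iff_le_succ.2 (fun i => (hx.2.2 i).1 c)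
  exact hm hst

lemma chain_w (hx : IsChainOn x) (t : Fin (n*n+1)) :
    (Finset.univ.filter fun c => x t c = true).card = t.1 := by
  have hstep : ∀ i : Fin (n*n),
      (Finset.univ.filter fun c => x i.castSucc c = true).card
        < (Finset.univ.filter fun c => x i.succ c = true).card := by
    intro i
    apply Finset.card_lt_card
    constructor
    · intro c hc
      rw [Finset.mem_filter] at hc ⊢
      exact ⟨hc.1, Bool.le_iff_imp.1 ((hx.2.2 i).1 c) hc.2⟩
    · intro hsub
      apply (hx.2.2 i).2
      funext c
      rcases Bool.eq_false_or_eq_true (x i.succ c) with h | h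
      · rw [h]
        have : c ∈ Finset.univ.filter fun c => x i.castSucc c = true :=
          hsub (Finset.mem_filter.2 ⟨Finset.mem_univ _, h⟩)
        exact (Finset.mem_filter.1 this).2
      · rw [h]
        rcases Bool.eq_false_or_eq_true (x i.castSucc c) with h2 | h2
        · exact absurd (Bool.le_iff_imp.1 ((hx.2.2 i).1 c) h2) (by rw [h]; simp)
        · exact h2
  have hlow : ∀ t : Fin (n*n+1), t.1 ≤ (Finset.univ.filter fun c => x t c = true).card := by
    intro t
    induction t using Fin.induction with
    | zero => exact Nat.zero_le _
    | succ i ih =>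
        have h1 := hstep i
        have h2 : (i.succ : Fin (n*n+1)).1 = i.1 + 1 := Fin.val_succ i
        have h3 : (i.castSucc : Fin (n*n+1)).1 = i.1 := Fin.coe_castSucc i
        omega
  have hhigh : ∀ t : Fin (n*n+1), (Finset.univ.filter fun c => x t c = true).card ≤ t.1 := by
    intro t
    induction t using Fin.reverseInduction with
    | last =>
        rw [hx.2.1]
        simp
    | cast i ih =>
        have h1 := hstep i
        have h2 : (i.succ : Fin (n*n+1)).1 = i.1 + 1 := Fin.val_succ i
        have h3 : (i.castSucc : Fin (n*n+1)).1 = i.1 := Fin.coe_castSucc i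
        omega
  exact le_antisymm (hhigh t) (hlow t)

lemma chain_step_singleton (hx : IsChainOn x) (i : Fin (n*n)) :
    ∃ c, (Finset.univ.filter fun c => ¬ x i.castSucc c = x i.succ c) = {c} := by
  apply Finset.card_eq_one.1
  have hsub : (Finset.univ.filter fun c => x i.castSucc c = true)
      ⊆ (Finset.univ.filter fun c => x i.succ c = true) := by
    intro c hc
    rw [Finset.mem_filter] at hc ⊢
    exact ⟨hc.1, Bool.le_iff_imp.1 ((hx.2.2 i).1 c) hc.2⟩
  have hD : (Finset.univ.filter fun c => ¬ x i.castSucc c = x i.succ c)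
      = (Finset.univ.filter fun c => x i.succ c = true)
        \ (Finset.univ.filter fun c => x i.castSucc c = true) := by
    ext c
    rw [Finset.mem_sdiff, Finset.mem_filter, Finset.mem_filter, Finset.mem_filter]
    have hle := (hx.2.2 i).1 c
    have key : ∀ (a b : Bool), a ≤ b → ((¬ a = b) ↔ (b = true ∧ ¬ a = true)) := by decide
    have := key _ _ hle
    tauto
  rw [hD, Finset.card_sdiff_of_subset hsub, chain_w hx, chain_w hx, Fin.val_succ, Fin.coe_castSucc]
  omega

/-- if `z` agrees with `y` on all rows except `r`, `f y = false`, `f z = true`,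
then row `r` of `z` is the pair row. -/
lemma pair_row_of_unchanged {y z : Fin (n*n) → Bool} {r : Fin n}
    (hy : fR n y = false) (hz : fR n z = true)
    (hagree : ∀ i, i ≠ r → rowF z i = rowF y i) : hR (rowF z r) = true := by
  obtain ⟨i, hi⟩ := (fR_iff z).1 hz
  rcases eq_or_ne i r with h | h
  · rwa [← h]
  · rw [hagree i h, fR_false_all hy i] at hi
    exact absurd hi (by simp)

lemma sandwich_pair {u midv v : Fin n → Bool} (hu : hR u = true) (hv : hR v = true)
    (hmid : hR midv = false) (h1 : ∀ l, u l = true → midv l = true)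
    (h2 : ∀ l, midv l = true → v l = true) : False := by
  have huv : u = v := pair_le_eq hu hv (fun l hl => h2 _ (h1 _ hl))
  have hmu : midv = u := by
    funext l
    rcases Bool.eq_false_or_eq_true (u l) with h | h
    · rw [h1 _ h, h]
    · rcases Bool.eq_false_or_eq_true (midv l) with h3 | h3
      · have := h2 _ h3
        rw [huv] at h
        rw [h] at this
        exact absurd this (by simp)
      · rw [h3, h]
  rw [hmu, hu] at hmid
  exact absurd hmid (by simp)

lemma altChain_fR_le (hp : 0 < n) (hx : IsChainOn x) : altChain (fR n) x ≤ 2 * n := by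
  classical
  choose fc hfc using chain_step_singleton hx
  -- facts about the flipped coordinate
  have hmem : ∀ i : Fin (n*n), ¬ x i.castSucc (fc i) = x i.succ (fc i) := by
    intro i
    have : fc i ∈ ({fc i} : Finset (Fin (n*n))) := Finset.mem_singleton_self _
    rw [← hfc i, Finset.mem_filter] at this
    exact this.2
  have hunch : ∀ i : Fin (n*n), ∀ c, c ≠ fc i → x i.castSucc c = x i.succ c := by
    intro i c hc
    by_contra hcon
    have : c ∈ ({fc i} : Finset (Fin (n*n))) := by
      rw [← hfc i, Finset.mem_filter]
      exact ⟨Finset.mem_univ _, hcon⟩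
    exact hc (Finset.mem_singleton.1 this)
  -- rows other than the flipped row are unchanged at each step
  have hrowunch : ∀ i : Fin (n*n), ∀ r : Fin n, r ≠ rowIdx hp (fc i) →
      rowF (x i.succ) r = rowF (x i.castSucc) r := by
    intro i r hr
    apply rowF_eq_of_agree hp (rowIdx hp (fc i)) r hr
    intro c hc
    exact (hunch i c (fun h => hc (by rw [h]))).symm
  -- no two alternation steps share (row, direction)
  have key : ∀ i j : Fin (n*n), i.1 < j.1 →
      fR n (x i.succ) ≠ fR n (x i.castSucc) →
      fR n (x j.succ) ≠ fR n (x j.castSucc) →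
      fR n (x i.succ) = fR n (x j.succ) →
      rowIdx hp (fc i) ≠ rowIdx hp (fc j) := by
    intro i j hij hai haj hdir hrow
    have hi1j : i.succ ≤ j.castSucc := by
      rw [Fin.le_def, Fin.val_succ, Fin.coe_castSucc]
      omega
    rcases Bool.eq_false_or_eq_true (fR n (x i.succ)) with hd | hd
    · -- direction true: f goes false → true at both steps
      have hic : fR n (x i.castSucc) = false := by
        rcases Bool.eq_false_or_eq_true (fR n (x i.castSucc)) with h | h
        · exact absurd (hd.trans h.symm) hai
        · exact h
      have hjc : fR n (x j.castSucc) = false := by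
        rcases Bool.eq_false_or_eq_true (fR n (x j.castSucc)) with h | h
        · exact absurd ((hdir.symm.trans hd).trans h.symm) haj
        · exact h
      have hjs : fR n (x j.succ) = true := hdir ▸ hd
      have hu : hR (rowF (x i.succ) (rowIdx hp (fc i))) = true :=
        pair_row_of_unchanged hic hd (fun r hr => hrowunch i r hr)
      have hv : hR (rowF (x j.succ) (rowIdx hp (fc i))) = true := by
        rw [hrow]
        exact pair_row_of_unchanged hjc hjs (fun r hr => hrowunch j r hr)
      have hmid : hR (rowF (x j.castSucc) (rowIdx hp (fc i))) = false :=
        fR_false_all hjc _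
      exact sandwich_pair hu hv hmid
        (fun l hl => Bool.le_iff_imp.1 (chain_mono hx hi1j _) hl)
        (fun l hl => Bool.le_iff_imp.1 (chain_mono hx (Fin.castSucc_le_succ j) _) hl)
    · -- direction false: f goes true → false at both steps
      have hic : fR n (x i.castSucc) = true := by
        rcases Bool.eq_false_or_eq_true (fR n (x i.castSucc)) with h | h
        · exact h
        · exact absurd (hd.trans h.symm) hai
      have hjc : fR n (x j.castSucc) = true := by
        rcases Bool.eq_false_or_eq_true (fR n (x j.castSucc)) with h | h
        · exact h
        · exact absurd ((hdir.symm.trans hd).trans h.symm) haj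
      have hjs : fR n (x j.succ) = false := hdir ▸ hd
      have hu : hR (rowF (x i.castSucc) (rowIdx hp (fc i))) = true :=
        pair_row_of_unchanged hd hic (fun r hr => (hrowunch i r hr).symm)
      have hv : hR (rowF (x j.castSucc) (rowIdx hp (fc i))) = true := by
        rw [hrow]
        exact pair_row_of_unchanged hjs hjc (fun r hr => (hrowunch j r hr).symm)
      have hmid : hR (rowF (x i.succ) (rowIdx hp (fc i))) = false :=
        fR_false_all hd _
      exact sandwich_pair hu hv hmid
        (fun l hl => Bool.le_iff_imp.1 (chain_mono hx (Fin.castSucc_le_succ i) _) hl)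
        (fun l hl => Bool.le_iff_imp.1 (chain_mono hx hi1j _) hl)
  -- injection into rows × directions
  rw [altChain]
  have hcard : (Finset.univ.filter fun i : Fin (n*n) =>
      fR n (x i.succ) ≠ fR n (x i.castSucc)).card
      ≤ (Finset.univ : Finset (Fin n × Bool)).card := by
    apply Finset.card_le_card_of_injOn
      (fun i => (rowIdx hp (fc i), fR n (x i.succ))) (fun i _ => Finset.mem_univ _)
    intro i hi j hj hijeq
    have hi' := (Finset.mem_filter.1 (Finset.mem_coe.1 hi)).2
    have hj' := (Finset.mem_filter.1 (Finset.mem_coe.1 hj)).2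
    have hrow : rowIdx hp (fc i) = rowIdx hp (fc j) := congrArg Prod.fst hijeq
    have hdir : fR n (x i.succ) = fR n (x j.succ) := congrArg Prod.snd hijeq
    by_contra hne
    rcases Nat.lt_or_ge i.1 j.1 with h | h
    · exact key i j h hi' hj' hdir hrow
    · have hlt : j.1 < i.1 := by
        rcases Nat.lt_or_ge j.1 i.1 with h2 | h2
        · exact h2
        · exact absurd (Fin.ext (le_antisymm h2 h)) hne
      exact key j i hlt hj' hi' hdir.symm hrow.symm
  calc (Finset.univ.filter fun i : Fin (n*n) =>
      fR n (x i.succ) ≠ fR n (x i.castSucc)).card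
      ≤ (Finset.univ : Finset (Fin n × Bool)).card := hcard
    _ = 2 * n := by simp [Nat.mul_comm]

end Chain

lemma altF_fR_le (hp : 0 < n) : altF (fR n) ≤ 2 * n := by
  apply Finset.sup_le
  intro x _
  split_ifs with h
  · exact altChain_fR_le hp h
  · exact Nat.zero_le _



lemma saltF_fR_le (hp : 0 < n) : saltF (fR n) ≤ 2 * n := by
  have h := Finset.inf'_le (α := ℕ) (fun b => altF fun x => fR n (bxor x b))
    (Finset.mem_univ (fun _ : Fin (n*n) => false))
  have he : (fun x => fR n (bxor x (fun _ => false))) = fR n := by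
    funext y
    congr 1
    funext c
    simp [bxor]
  rw [he] at h
  exact le_trans h (altF_fR_le hp)

end S11


/-- for every even `n ≥ 4`, Rubinstein's function satisfies
`4 · bs(f_R) ≥ s(f_R) · salt(f_R)`. -/
theorem stmt11 (n : ℕ) (hn : 4 ≤ n) (hev : Even n) :
    sens (fR n) * saltF (fR n) ≤ 4 * bs (fR n) := by
  have hp : 0 < n := by omega
  obtain ⟨t, ht⟩ := hev
  have h2 : n / 2 = t := by omega
  calc sens (fR n) * saltF (fR n)
      ≤ n * (2 * n) := Nat.mul_le_mul (S11.sens_fR_le hp) (S11.saltF_fR_le hp)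
    _ = 4 * (n * (n / 2)) := by rw [h2, ht]; ring
    _ ≤ 4 * bs (fR n) := Nat.mul_le_mul_left 4 (S11.bs_fR_ge hp)
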